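/- The lattice E₈^E = {(x₁,...,x₄) ∈ E⁴ : (x₁,...,x₄) mod θ ∈ C₄}, where C₄ ⊆ 𝔽₃⁴ is the tetracode (the span of (0,1,1,1) and (1,0,1,-1)), satisfies E₈^E = θ·(E₈^E)'. -/
import Mathlib

noncomputable section

def ω : ℂ := -1/2 + (Real.sqrt 3 / 2) * Complex.I
def θ : ℂ := ω - (starRingEnd ℂ) ω
def Eis : Subring ℂ := Subring.closure {ω}

/-- The tetracode `C₄ ⊆ 𝔽₃⁴`, spanned by `(0,1,1,1)` and `(1,0,1,-1)`. -/
def tetracode : Submodule (ZMod 3) (Fin 4 → ZMod 3) :=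
  Submodule.span (ZMod 3) {![0, 1, 1, 1], ![1, 0, 1, -1]}

/-- `E₈^E = {x ∈ Eis⁴ : x mod θ ∈ C₄}`. -/
def E8lat : Set (Fin 4 → ℂ) :=
  {x | (∀ i, x i ∈ Eis) ∧
    ∃ c ∈ tetracode, ∀ i, ∃ e ∈ Eis, x i - ((c i).val : ℂ) = θ * e}

/-- The standard Hermitian form on `ℂ⁴`. -/
def herm4 (x y : Fin 4 → ℂ) : ℂ := ∑ i, x i * (starRingEnd ℂ) (y i)

/-- The dual lattice of `E₈^E`. -/
def E8dual : Set (Fin 4 → ℂ) := {v | ∀ x ∈ E8lat, herm4 x v ∈ Eis}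

lemma conj_omega : (starRingEnd ℂ) ω = -1 - ω := by
  have hω : ω = Complex.ofReal (-1/2) + Complex.ofReal (Real.sqrt 3 / 2) * Complex.I := by
    simp only [ω]; push_cast; ring
  rw [hω, map_add, map_mul, Complex.conj_ofReal, Complex.conj_ofReal, Complex.conj_I]
  push_cast; ring

lemma sqc : ((Real.sqrt 3 : ℝ) : ℂ)^2 = 3 := by
  norm_cast; rw [Real.sq_sqrt]; norm_num

lemma omega_sq : ω^2 = -1 - ω := by
  have h : Complex.I^2 = -1 := Complex.I_sq
  simp only [ω]
  linear_combination (Complex.I^2/4) * sqc + (3/4 : ℂ) * h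

lemma theta_eq : θ = 1 + 2 * ω := by rw [θ, conj_omega]; ring

lemma conj_theta : (starRingEnd ℂ) θ = -θ := by
  rw [θ, map_sub, Complex.conj_conj]; ring

lemma theta_ne : θ ≠ 0 := by
  rw [θ, conj_omega]
  intro h
  have h2 := congrArg Complex.im h
  simp [ω] at h2

lemma indep {a b : ℤ} (h : (a:ℂ) + b * ω = 0) : a = 0 ∧ b = 0 := by
  have him := congrArg Complex.im h
  have hre := congrArg Complex.re h
  simp [ω, Complex.add_im, Complex.add_re, Complex.mul_im, Complex.mul_re] at him hre
  subst him
  refine ⟨?_, rfl⟩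
  exact_mod_cast (by simpa using hre : (a:ℝ) = 0)

lemma mem_Eis {z : ℂ} : z ∈ Eis ↔ ∃ m n : ℤ, z = m + n * ω := by
  constructor
  · intro hz
    refine Subring.closure_induction ?_ ?_ ?_ ?_ ?_ ?_ hz
    · rintro x rfl; exact ⟨0, 1, by push_cast; ring⟩
    · exact ⟨0, 0, by push_cast; ring⟩
    · exact ⟨1, 0, by push_cast; ring⟩
    · rintro x y _ _ ⟨m, n, rfl⟩ ⟨p, q, rfl⟩; exact ⟨m + p, n + q, by push_cast; ring⟩
    · rintro x _ ⟨m, n, rfl⟩; exact ⟨-m, -n, by push_cast; ring⟩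
    · rintro x y _ _ ⟨m, n, rfl⟩ ⟨p, q, rfl⟩
      exact ⟨m * p - n * q, m * q + n * p - n * q, by push_cast; linear_combination (n * q : ℂ) * omega_sq⟩
  · rintro ⟨m, n, rfl⟩
    exact Subring.add_mem _ (intCast_mem Eis m)
      (Subring.mul_mem _ (intCast_mem Eis n) (Subring.subset_closure rfl))

lemma div_iff {m n : ℤ} : (∃ e ∈ Eis, (m:ℂ) + n * ω = θ * e) ↔ (3:ℤ) ∣ m + n := by
  constructor
  · rintro ⟨e, he, hmn⟩
    rcases mem_Eis.1 he with ⟨p, q, rfl⟩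
    have h0 : ((m - (p - 2*q) : ℤ):ℂ) + ((n - (2*p - q) : ℤ):ℂ) * ω = 0 := by
      push_cast
      rw [theta_eq] at hmn
      linear_combination hmn + (2*q:ℂ) * omega_sq
    rcases indep h0 with ⟨h1, h2⟩
    exact ⟨p - q, by omega⟩
  · rintro ⟨k, hk⟩
    refine ⟨(2*k - m : ℤ) + (k - m : ℤ) * ω, mem_Eis.2 ⟨_, _, rfl⟩, ?_⟩
    rw [theta_eq]
    have hn : (n:ℂ) = 3*k - m := by exact_mod_cast congrArg (Int.cast : ℤ → ℂ) (by omega : n = 3*k - m)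
    rw [hn]
    push_cast
    linear_combination (2*((m:ℂ) - k)) * omega_sq

lemma conj_mem_Eis {z : ℂ} (hz : z ∈ Eis) : (starRingEnd ℂ) z ∈ Eis := by
  rcases mem_Eis.1 hz with ⟨m, n, rfl⟩
  refine mem_Eis.2 ⟨m - n, -n, ?_⟩
  rw [map_add, map_mul, conj_omega, map_intCast, map_intCast]
  push_cast
  ring

lemma theta_mem : θ ∈ Eis := mem_Eis.2 ⟨1, 2, by rw [theta_eq]; push_cast; ring⟩

lemma mul_conj_rep (m n p q : ℤ) :
    ((m:ℂ) + n * ω) * (starRingEnd ℂ) ((p:ℂ) + q * ω)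
      = ((m*p - m*q + n*q : ℤ):ℂ) + ((n*p - m*q : ℤ):ℂ) * ω := by
  rw [map_add, map_mul, conj_omega, map_intCast, map_intCast]
  push_cast
  linear_combination (-(n:ℂ)*q) * omega_sq

lemma three_zero : (3 : ZMod 3) = 0 := by decide

lemma mem_tetra {c : Fin 4 → ZMod 3} :
    c ∈ tetracode ↔ ∃ a b : ZMod 3, a • ![0,1,1,1] + b • ![1,0,1,-1] = c :=
  Submodule.mem_span_pair

lemma tetra_orth {c d : Fin 4 → ZMod 3} (hc : c ∈ tetracode) (hd : d ∈ tetracode) :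
    ∑ i, c i * d i = 0 := by
  rcases mem_tetra.1 hc with ⟨a1, b1, rfl⟩
  rcases mem_tetra.1 hd with ⟨a2, b2, rfl⟩
  simp [Fin.sum_univ_four]
  linear_combination (a1*a2 + b1*b2) * three_zero

lemma tetra_of_orth {c : Fin 4 → ZMod 3}
    (h1 : c 1 + c 2 + c 3 = 0) (h2 : c 0 + c 2 - c 3 = 0) : c ∈ tetracode := by
  refine mem_tetra.2 ⟨c 1, c 2 - c 1, ?_⟩
  funext i
  fin_cases i <;> simp
  · linear_combination -h2 - h1 + c 2 * three_zero
  · linear_combination -h1 + c 1 * three_zero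

lemma E8lat_iff {x : Fin 4 → ℂ} :
    x ∈ E8lat ↔ ∃ c ∈ tetracode, ∀ i, ∃ m n : ℤ,
      x i = m + n * ω ∧ ((m + n : ℤ) : ZMod 3) = c i := by
  constructor
  · rintro ⟨hE, c, hc, h⟩
    refine ⟨c, hc, fun i => ?_⟩
    rcases mem_Eis.1 (hE i) with ⟨m, n, hx⟩
    rcases h i with ⟨e, he, hei⟩
    have hdvd : (3:ℤ) ∣ (m - ((c i).val : ℤ)) + n := by
      refine div_iff.1 ⟨e, he, ?_⟩
      rw [← hei, hx]; push_cast; ring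
    refine ⟨m, n, hx, ?_⟩
    have h0 : (((m - ((c i).val:ℤ)) + n : ℤ) : ZMod 3) = 0 :=
      (ZMod.intCast_zmod_eq_zero_iff_dvd _ 3).2 hdvd
    push_cast at h0
    have hval : (((c i).val : ℤ) : ZMod 3) = c i := by
      push_cast; exact ZMod.natCast_rightInverse (c i)
    push_cast
    push_cast at hval
    linear_combination h0 + hval
  · rintro ⟨c, hc, h⟩
    constructor
    · intro i
      rcases h i with ⟨m, n, hx, _⟩
      exact hx ▸ mem_Eis.2 ⟨m, n, rfl⟩
    · refine ⟨c, hc, fun i => ?_⟩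
      rcases h i with ⟨m, n, hx, hcast⟩
      have hdvd : (3:ℤ) ∣ (m - ((c i).val : ℤ)) + n := by
        have h0 : ((m - ((c i).val : ℤ) + n : ℤ) : ZMod 3) = 0 := by
          have hval : (((c i).val : ℤ) : ZMod 3) = c i := by
            push_cast; exact ZMod.natCast_rightInverse (c i)
          push_cast
          push_cast at hval hcast
          linear_combination hcast + (-1 : ZMod 3) * hval
        exact_mod_cast (ZMod.intCast_zmod_eq_zero_iff_dvd _ 3).1 h0
      rcases div_iff.2 hdvd with ⟨e, he, hee⟩
      refine ⟨e, he, ?_⟩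
      rw [← hee, hx]; push_cast; ring

lemma herm_theta_dvd {x y : Fin 4 → ℂ} (hx : x ∈ E8lat) (hy : y ∈ E8lat) :
    ∃ e ∈ Eis, herm4 x y = θ * e := by
  rcases E8lat_iff.1 hx with ⟨c, hc, hxr⟩
  rcases E8lat_iff.1 hy with ⟨d, hd, hyr⟩
  choose m n hxe hxc using hxr
  choose p q hye hyc using hyr
  have hsum : herm4 x y = ((∑ i, (m i * p i - m i * q i + n i * q i) : ℤ) : ℂ)
      + ((∑ i, (n i * p i - m i * q i) : ℤ) : ℂ) * ω := by
    have h1 : herm4 x y = ∑ i, (((m i * p i - m i * q i + n i * q i : ℤ):ℂ)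
        + ((n i * p i - m i * q i : ℤ):ℂ) * ω) :=
      Finset.sum_congr rfl fun i _ => by rw [hxe i, hye i, mul_conj_rep]
    rw [h1, Finset.sum_add_distrib, ← Finset.sum_mul]
    push_cast
    ring
  have hdvd : (3:ℤ) ∣ (∑ i, (m i * p i - m i * q i + n i * q i)) + (∑ i, (n i * p i - m i * q i)) := by
    have h0 : (((∑ i, (m i * p i - m i * q i + n i * q i)) + (∑ i, (n i * p i - m i * q i)) : ℤ) : ZMod 3) = 0 := ?_
    · exact_mod_cast (ZMod.intCast_zmod_eq_zero_iff_dvd _ 3).1 h0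
    push_cast
    rw [← Finset.sum_add_distrib]
    have : ∀ i ∈ Finset.univ, ((m i : ZMod 3) * p i - m i * q i + n i * q i)
        + ((n i : ZMod 3) * p i - m i * q i) = c i * d i := by
      intro i _
      have h1 := hxc i
      have h2 := hyc i
      push_cast at h1 h2
      linear_combination ((p i : ZMod 3) + q i) * h1 + (c i) * h2
        - ((m i : ZMod 3) * q i) * three_zero
    rw [Finset.sum_congr rfl this]
    exact tetra_orth hc hd
  rcases div_iff.2 hdvd with ⟨e, he, hee⟩
  exact ⟨e, he, by rw [hsum, ← hee]⟩

lemma dual_entries {v : Fin 4 → ℂ} (hv : v ∈ E8dual) (i : Fin 4) : θ * v i ∈ Eis := by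
  have hb : (fun j => if j = i then θ else 0) ∈ E8lat := by
    constructor
    · intro j; by_cases h : j = i <;> simp [h, theta_mem, Subring.zero_mem]
    · refine ⟨0, Submodule.zero_mem _, fun j => ?_⟩
      by_cases h : j = i
      · exact ⟨1, Subring.one_mem _, by simp [h, ZMod.val_zero]⟩
      · exact ⟨0, Subring.zero_mem _, by simp [h, ZMod.val_zero]⟩
  have h1 : herm4 (fun j => if j = i then θ else 0) v ∈ Eis := hv _ hb
  have h2 : herm4 (fun j => if j = i then θ else 0) v = θ * (starRingEnd ℂ) (v i) := by
    unfold herm4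
    rw [Finset.sum_eq_single i]
    · simp
    · intro b _ hb; simp [hb]
    · simp
  rw [h2] at h1
  have h3 := conj_mem_Eis h1
  rw [map_mul, conj_theta, Complex.conj_conj] at h3
  have := Subring.neg_mem _ h3
  simpa using this

lemma dual_dot {v : Fin 4 → ℂ} (hv : v ∈ E8dual) {g : Fin 4 → ZMod 3} (hg : g ∈ tetracode)
    {m n : Fin 4 → ℤ} (hmn : ∀ i, θ * v i = m i + n i * ω) :
    ∑ i, g i * ((m i + n i : ℤ) : ZMod 3) = 0 := by
  have hxg : (fun i => (((g i).val : ℕ) : ℂ)) ∈ E8lat := by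
    constructor
    · intro i; exact natCast_mem Eis _
    · exact ⟨g, hg, fun i => ⟨0, Subring.zero_mem _, by simp⟩⟩
  have hr : herm4 (fun i => (((g i).val : ℕ) : ℂ)) v ∈ Eis := hv _ hxg
  have hcr := conj_mem_Eis hr
  have hkey : ((∑ i, ((g i).val : ℤ) * m i : ℤ) : ℂ) + ((∑ i, ((g i).val : ℤ) * n i : ℤ) : ℂ) * ω
      = θ * ((starRingEnd ℂ) (herm4 (fun i => (((g i).val : ℕ) : ℂ)) v)) := by
    unfold herm4
    rw [map_sum, Finset.mul_sum]
    have : ∀ i ∈ Finset.univ, θ * (starRingEnd ℂ) ((((g i).val : ℕ) : ℂ) * (starRingEnd ℂ) (v i))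
        = (((g i).val : ℤ) : ℂ) * m i + ((((g i).val : ℤ)) : ℂ) * n i * ω := by
      intro i _
      rw [map_mul, Complex.conj_conj, map_natCast]
      have := hmn i
      push_cast
      linear_combination (((g i).val : ℕ) : ℂ) * this
    rw [Finset.sum_congr rfl this]
    push_cast
    rw [Finset.sum_add_distrib, ← Finset.sum_mul]
  have hdvd : (3:ℤ) ∣ (∑ i, ((g i).val : ℤ) * m i) + (∑ i, ((g i).val : ℤ) * n i) :=
    div_iff.1 ⟨_, hcr, hkey⟩
  have h0 := (ZMod.intCast_zmod_eq_zero_iff_dvd _ 3).2 hdvd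
  push_cast at h0
  rw [← Finset.sum_add_distrib] at h0
  rw [← h0]
  refine Finset.sum_congr rfl fun i _ => ?_
  have hval : (((g i).val : ℕ) : ZMod 3) = g i := ZMod.natCast_rightInverse (g i)
  push_cast
  rw [hval]
  ring

lemma g1_mem : (![0,1,1,1] : Fin 4 → ZMod 3) ∈ tetracode :=
  Submodule.subset_span (Set.mem_insert _ _)

lemma g2_mem : (![1,0,1,-1] : Fin 4 → ZMod 3) ∈ tetracode :=
  Submodule.subset_span (Set.mem_insert_of_mem _ rfl)

/-- `E₈^E = θ·(E₈^E)'`. -/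
theorem stmt6 : E8lat = {z | ∃ v ∈ E8dual, z = θ • v} := by
  ext z
  constructor
  · intro hz
    refine ⟨θ⁻¹ • z, ?_, ?_⟩
    · intro y hy
      rcases herm_theta_dvd hy hz with ⟨e, he, hee⟩
      have h1 : herm4 y (θ⁻¹ • z) = ((starRingEnd ℂ) θ)⁻¹ * herm4 y z := by
        unfold herm4
        rw [Finset.mul_sum]
        refine Finset.sum_congr rfl fun i _ => ?_
        simp only [Pi.smul_apply, smul_eq_mul, map_mul, map_inv₀]
        ring
      rw [h1, conj_theta, hee]
      have h2 : (-θ)⁻¹ * (θ * e) = -e := by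
        rw [inv_neg, neg_mul, ← mul_assoc, inv_mul_cancel₀ theta_ne, one_mul]
      rw [h2]
      exact Subring.neg_mem _ he
    · funext i
      simp only [Pi.smul_apply, smul_eq_mul]
      rw [← mul_assoc, mul_inv_cancel₀ theta_ne, one_mul]
  · rintro ⟨v, hv, rfl⟩
    have hE : ∀ i, θ * v i ∈ Eis := dual_entries hv
    choose m n hmn using fun i => mem_Eis.1 (hE i)
    have h1 := dual_dot hv g1_mem hmn
    have h2 := dual_dot hv g2_mem hmn
    simp [Fin.sum_univ_four] at h1 h2
    refine E8lat_iff.2 ⟨fun i => ((m i + n i : ℤ) : ZMod 3), ?_, fun i => ⟨m i, n i, ?_, rfl⟩⟩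
    · apply tetra_of_orth
      · push_cast
        linear_combination h1
      · push_cast
        linear_combination h2
    · simp only [Pi.smul_apply, smul_eq_mul]
      exact hmn i
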